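/- Probabilistic characterization of single-premise uncertain inference (Proposition 3, (2)⇔(1)): Let A, B : W → {0,1/2,1} be truth assignments on a finite nonempty set W. Then [for every w ∈ W, A(w) ≤ B(w)] or [B(w) ≥ 1/2 for all w] holds if and only if for every probability mass function c on W, p_c(A) ≤ p_c(B). -/
import Mathlib


/-- The set of trivalent truth values {0, 1/2, 1} inside ℚ. -/
def Tri (x : ℚ) : Prop := x = 0 ∨ x = 1/2 ∨ x = 1

/-- Cooper conditional: f→(0,y)=1/2, f→(1,y)=y, f→(1/2,y)=y (on trivalent values). -/
def tcond (a b : ℚ) : ℚ := if a = 0 then 1/2 else b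

/-- Quasi-conjunction. -/
def tand (a b : ℚ) : ℚ :=
  if a = 0 ∨ b = 0 then 0 else if a = 1 ∨ b = 1 then 1 else 1/2

/-- Quasi-disjunction. -/
def tor (a b : ℚ) : ℚ :=
  if a = 1 ∨ b = 1 then 1 else if a = 0 ∨ b = 0 then 0 else 1/2

/-- Strong Kleene negation. -/
def tneg (a : ℚ) : ℚ := 1 - a

open Finset in
/-- Weight of the worlds where the assignment `v` takes the value `x`. -/
def wt {W : Type*} [Fintype W] (c : W → ℝ) (v : W → ℚ) (x : ℚ) : ℝ :=
  ∑ w ∈ Finset.univ.filter (fun w => v w = x), c w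

/-- Trivalent probability of a truth assignment. -/
noncomputable def pv {W : Type*} [Fintype W] (c : W → ℝ) (v : W → ℚ) : ℝ :=
  if 0 < wt c v 1 + wt c v 0 then wt c v 1 / (wt c v 1 + wt c v 0) else 1

lemma wt_nonneg {W : Type*} [Fintype W] {c : W → ℝ} (hc : ∀ w, 0 ≤ c w) (v : W → ℚ) (x : ℚ) :
    0 ≤ wt c v x := Finset.sum_nonneg fun w _ => hc w

lemma pv_le_one {W : Type*} [Fintype W] {c : W → ℝ} (hc : ∀ w, 0 ≤ c w) (v : W → ℚ) :
    pv c v ≤ 1 := by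
  unfold pv
  split_ifs with h
  · rw [div_le_one h]
    linarith [wt_nonneg hc v 0]
  · exact le_refl 1

lemma wt_mono {W : Type*} [Fintype W] {c : W → ℝ} (hc : ∀ w, 0 ≤ c w) {u v : W → ℚ} {x y : ℚ}
    (h : ∀ w, u w = x → v w = y) : wt c u x ≤ wt c v y := by
  unfold wt
  apply Finset.sum_le_sum_of_subset_of_nonneg
  · intro w hw
    simp only [Finset.mem_filter, Finset.mem_univ, true_and] at hw ⊢
    exact h w hw
  · intro w _ _; exact hc w

lemma wt_single {W : Type*} [Fintype W] [DecidableEq W] (w0 : W) (c0 : ℝ) (v : W → ℚ) (x : ℚ) :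
    wt (fun w => if w = w0 then c0 else 0) v x = if v w0 = x then c0 else 0 := by
  unfold wt
  rw [Finset.sum_ite_eq' (Finset.univ.filter (fun w => v w = x)) w0 (fun _ => c0)]
  simp [Finset.mem_filter]

lemma wt_add {W : Type*} [Fintype W] (c d : W → ℝ) (v : W → ℚ) (x : ℚ) :
    wt (fun w => c w + d w) v x = wt c v x + wt d v x := Finset.sum_add_distrib

/-- Probabilistic characterization of valid single-premise uncertain inference. -/
theorem uncertain_inference_characterization {W : Type*} [Fintype W] [Nonempty W]
    (A B : W → ℚ) (hA : ∀ w, Tri (A w)) (hB : ∀ w, Tri (B w)) :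
    ((∀ w, A w ≤ B w) ∨ (∀ w, 1/2 ≤ B w)) ↔
      (∀ c : W → ℝ, (∀ w, 0 ≤ c w) → (∑ w, c w) = 1 → pv c A ≤ pv c B) := by
  classical
  constructor
  · rintro (h | h) c hc hsum
    · -- pointwise A ≤ B
      have h1 : wt c A 1 ≤ wt c B 1 := by
        apply wt_mono hc
        intro w hw
        have := h w
        rcases hB w with hb | hb | hb <;> rw [hw] at this <;> rw [hb] at this ⊢ <;>
          first | rfl | norm_num at this
      have h0 : wt c B 0 ≤ wt c A 0 := by
        apply wt_mono hc
        intro w hw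
        have := h w
        rcases hA w with ha | ha | ha <;> rw [hw] at this <;> rw [ha] at this ⊢ <;>
          first | rfl | norm_num at this
      have a1 := wt_nonneg hc A 1
      have a0 := wt_nonneg hc A 0
      have b1 := wt_nonneg hc B 1
      have b0 := wt_nonneg hc B 0
      unfold pv
      split_ifs with ha hb hb
      · rw [div_le_div_iff₀ ha hb]
        nlinarith [mul_le_mul h1 h0 b0 (a1.trans h1)]
      · rw [div_le_one ha]; linarith
      · have ha0 : wt c A 0 = 0 := by nlinarith
        rw [one_le_div hb]; nlinarith
      · exact le_refl 1
    · -- all B ≥ 1/2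
      have hb0 : wt c B 0 = 0 := by
        unfold wt
        apply Finset.sum_eq_zero
        intro w hw
        simp only [Finset.mem_filter, Finset.mem_univ, true_and] at hw
        have := h w
        rw [hw] at this
        norm_num at this
      have hpB : pv c B = 1 := by
        unfold pv
        rw [hb0, add_zero]
        split_ifs with h'
        · field_simp
        · rfl
      rw [hpB]
      exact pv_le_one hc A
  · intro hcon
    by_contra hneg
    push_neg at hneg
    obtain ⟨⟨w0, hw0⟩, w1, hw1⟩ := hneg
    have hBw1 : B w1 = 0 := by
      rcases hB w1 with hb | hb | hb <;>
        first | exact hb | (rw [hb] at hw1; norm_num at hw1)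
    -- B w0 < A w0
    rcases hB w0 with hb | hb | hb
    · -- B w0 = 0 : use the dirac measure at w0
      set c : W → ℝ := fun w => if w = w0 then (1:ℝ) else 0 with hcdef
      have hcn : ∀ w, 0 ≤ c w := by intro w; simp only [hcdef]; split <;> norm_num
      have hcs : (∑ w, c w) = 1 := by simp [hcdef]
      have hle := hcon c hcn hcs
      have hB1 : wt c B 1 = 0 := by rw [hcdef, wt_single, hb]; norm_num
      have hB0 : wt c B 0 = 1 := by rw [hcdef, wt_single, hb]; norm_num
      have hpB : pv c B = 0 := by unfold pv; rw [hB1, hB0]; norm_num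
      have hpA : pv c A = 1 := by
        rcases hA w0 with ha | ha | ha
        · rw [ha, hb] at hw0; norm_num at hw0
        · have hA1 : wt c A 1 = 0 := by rw [hcdef, wt_single, ha]; norm_num
          have hA0 : wt c A 0 = 0 := by rw [hcdef, wt_single, ha]; norm_num
          unfold pv; rw [hA1, hA0]; norm_num
        · have hA1 : wt c A 1 = 1 := by rw [hcdef, wt_single, ha]; norm_num
          have hA0 : wt c A 0 = 0 := by rw [hcdef, wt_single, ha]; norm_num
          unfold pv; rw [hA1, hA0]; norm_num
      rw [hpA, hpB] at hle
      norm_num at hle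
    · -- B w0 = 1/2, so A w0 = 1 ; use mass 1/2 on each of w0 and w1
      have hAw0 : A w0 = 1 := by
        rcases hA w0 with ha | ha | ha <;> rw [ha, hb] at hw0 <;>
          first | (exact ha) | norm_num at hw0
      have hne : w1 ≠ w0 := by
        intro h; rw [h, hb] at hBw1; norm_num at hBw1
      set c : W → ℝ := fun w => (if w = w0 then (1:ℝ)/2 else 0) + (if w = w1 then (1:ℝ)/2 else 0)
        with hcdef
      have hcn : ∀ w, 0 ≤ c w := by
        intro w; simp only [hcdef]; split <;> split <;> norm_num
      have hcs : (∑ w, c w) = 1 := by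
        rw [hcdef, Finset.sum_add_distrib]; simp; norm_num
      have hle := hcon c hcn hcs
      have hB1 : wt c B 1 = 0 := by
        rw [hcdef, wt_add, wt_single, wt_single, hb, hBw1]; norm_num
      have hB0 : wt c B 0 = 1/2 := by
        rw [hcdef, wt_add, wt_single, wt_single, hb, hBw1]; norm_num
      have hpB : pv c B = 0 := by unfold pv; rw [hB1, hB0]; norm_num
      have hA1 : wt c A 1 = 1/2 + (if A w1 = 1 then (1:ℝ)/2 else 0) := by
        rw [hcdef, wt_add, wt_single, wt_single, hAw0]; norm_num
      have hA1pos : 0 < wt c A 1 := by rw [hA1]; split <;> norm_num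
      have hA0 : 0 ≤ wt c A 0 := wt_nonneg hcn A 0
      have hpA : 0 < pv c A := by
        unfold pv
        rw [if_pos (by linarith)]
        positivity
      rw [hpB] at hle
      linarith
    · -- B w0 = 1 contradicts B w0 < A w0 ≤ 1
      rcases hA w0 with ha | ha | ha <;> rw [ha, hb] at hw0 <;> norm_num at hw0
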